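/- Suppose C₁ and C₂ are compact, self-adjoint, positive definite operators on a Hilbert space H with the same eigenvalues ρ_j² but possibly different orthonormal eigenbases, C₁e_j = ρ_j²e_j and C₂φ_j = ρ_j²φ_j. If I − C₁^{-1/2} C₂ C₁^{-1/2} extends to a Hilbert–Schmidt operator, then there exists K > 0 such that for every n and every unit vector h in span{φ₁, …, φ_n}, one has ‖C₁^{-1/2} h‖² ≤ K / ρ_n². -/

import Mathlib

open scoped RealInnerProductSpace ENNReal NNReal

private lemma coord_ext' {H : Type*} [NormedAddCommGroup H] [InnerProductSpace ℝ H]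
    (b : HilbertBasis ℕ ℝ H) {u v : H} (h : ∀ i, ⟪b i, u⟫ = ⟪b i, v⟫) : u = v := by
  apply b.repr.injective
  apply lp.ext
  funext i
  rw [b.repr_apply_apply, b.repr_apply_apply, h i]

private lemma sym_of_basis' {H : Type*} [NormedAddCommGroup H] [InnerProductSpace ℝ H]
    [CompleteSpace H] (b : HilbertBasis ℕ ℝ H) (A : H →L[ℝ] H)
    (hA : ∀ i j, ⟪A (b i), b j⟫ = ⟪b i, A (b j)⟫) : ∀ u v : H, ⟪A u, v⟫ = ⟪u, A v⟫ := by
  have hadj : ContinuousLinearMap.adjoint A = A := by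
    apply ContinuousLinearMap.ext_on
      (Submodule.dense_iff_topologicalClosure_eq_top.mpr b.dense_span)
    rintro x ⟨i, rfl⟩
    apply coord_ext' b
    intro j
    rw [ContinuousLinearMap.adjoint_inner_right]
    exact hA j i
  intro u v
  nth_rewrite 1 [← hadj]
  rw [ContinuousLinearMap.adjoint_inner_left]

private lemma quad_aux {a b c Tn : ℝ} (hd : (-2 * b) ^ 2 - 4 * a * c ≤ 0)
    (hTx : a ≤ Tn * b) (hb : 0 < b) (hc : 0 ≤ c) (hTn : 0 ≤ Tn) : b ≤ Tn * c := by
  nlinarith [hd, mul_le_mul_of_nonneg_right hTx hc, hb]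

theorem stmt6 {H : Type*} [NormedAddCommGroup H] [InnerProductSpace ℝ H] [CompleteSpace H]
    (e φ : HilbertBasis ℕ ℝ H) (ρ : ℕ → ℝ) (hρpos : ∀ j, 0 < ρ j)
    (hρmono : Antitone ρ) (hρ0 : Filter.Tendsto ρ Filter.atTop (nhds 0))
    (C₁ C₂ : H →L[ℝ] H)
    (hC₁ : ∀ j, C₁ (e j) = (ρ j ^ 2) • e j)
    (hC₂ : ∀ j, C₂ (φ j) = (ρ j ^ 2) • φ j)
    (B : H →L[ℝ] H)
    (hB : ∀ j k, ⟪B (e j), e k⟫ =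
      (if j = k then (1 : ℝ) else 0) - (ρ j)⁻¹ * (ρ k)⁻¹ * ⟪C₂ (e j), e k⟫)
    (hHS : Summable fun j => ‖B (e j)‖ ^ 2) :
    ∃ K > (0 : ℝ), ∀ n : ℕ, ∀ h ∈ Submodule.span ℝ (φ '' Set.Iic n), ‖h‖ = 1 →
      ∑' j, (⟪h, e j⟫ / ρ j) ^ 2 ≤ K / ρ n ^ 2 := by
  classical
  have hρne : ∀ j, ρ j ≠ 0 := fun j => (hρpos j).ne'
  set T : H →L[ℝ] H := ContinuousLinearMap.id ℝ H - B with hT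
  -- symmetry of C₂
  have hφON : ∀ i j, ⟪φ i, φ j⟫ = if i = j then (1:ℝ) else 0 :=
    orthonormal_iff_ite.mp φ.orthonormal
  have heON : ∀ i j, ⟪e i, e j⟫ = if i = j then (1:ℝ) else 0 :=
    orthonormal_iff_ite.mp e.orthonormal
  have hC₂sym : ∀ u v : H, ⟪C₂ u, v⟫ = ⟪u, C₂ v⟫ := by
    apply sym_of_basis' φ
    intro i j
    rw [hC₂ i, hC₂ j, real_inner_smul_left, real_inner_smul_right, hφON i j]
    by_cases hij : i = j
    · subst hij; ring
    · rw [if_neg hij]; ring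
  have hBsym : ∀ u v : H, ⟪B u, v⟫ = ⟪u, B v⟫ := by
    apply sym_of_basis' e
    intro i j
    have h2 : ⟪e i, B (e j)⟫ = (if j = i then (1:ℝ) else 0) - (ρ j)⁻¹ * (ρ i)⁻¹ * ⟪C₂ (e j), e i⟫ := by
      rw [real_inner_comm]; exact hB j i
    have h1 : ⟪C₂ (e i), e j⟫ = ⟪C₂ (e j), e i⟫ := by
      rw [hC₂sym, real_inner_comm]
    rw [hB i j, h2, h1]
    by_cases hij : i = j
    · subst hij; ring
    · rw [if_neg hij, if_neg (Ne.symm hij)]; ring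
  have hTsym : ∀ u v : H, ⟪T u, v⟫ = ⟪u, T v⟫ := by
    intro u v
    simp only [hT, ContinuousLinearMap.sub_apply, ContinuousLinearMap.id_apply,
      inner_sub_left, inner_sub_right, hBsym u v]
  -- positivity of C₂
  have hC₂pos : ∀ y : H, 0 ≤ ⟪C₂ y, y⟫ := by
    intro y
    rw [← φ.tsum_inner_mul_inner (C₂ y) y]
    apply tsum_nonneg
    intro i
    have h1 : ⟪C₂ y, φ i⟫ = ρ i ^ 2 * ⟪φ i, y⟫ := by
      rw [hC₂sym, hC₂ i, real_inner_smul_right, real_inner_comm]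
    rw [h1, mul_assoc]
    exact mul_nonneg (by positivity) (mul_self_nonneg _)
  -- positivity of T
  have hTpos : ∀ v : H, 0 ≤ ⟪T v, v⟫ := by
    have hexp : ∀ (A : H →L[ℝ] H) (d : ℕ → ℝ) (s : Finset ℕ),
        ⟪A (∑ i ∈ s, d i • e i), ∑ j ∈ s, d j • e j⟫
          = ∑ i ∈ s, ∑ j ∈ s, d i * d j * ⟪A (e i), e j⟫ := by
      intro A d s
      rw [map_sum, sum_inner]
      refine Finset.sum_congr rfl fun i _ => ?_
      rw [map_smul, inner_sum]
      refine Finset.sum_congr rfl fun j _ => ?_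
      rw [real_inner_smul_left, real_inner_smul_right]
      ring
    have hspan : ∀ v ∈ Submodule.span ℝ (Set.range e), 0 ≤ ⟪T v, v⟫ := by
      intro v hv
      obtain ⟨c, rfl⟩ := Finsupp.mem_span_range_iff_exists_finsupp.mp hv
      rw [Finsupp.sum]
      have hTv : ⟪T (∑ i ∈ c.support, c i • e i), ∑ i ∈ c.support, c i • e i⟫
          = ∑ i ∈ c.support, ∑ j ∈ c.support,
              (c i / ρ i) * (c j / ρ j) * ⟪C₂ (e i), e j⟫ := by
        rw [hexp T c c.support]
        refine Finset.sum_congr rfl fun i _ => Finset.sum_congr rfl fun j _ => ?_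
        have hTe : ⟪T (e i), e j⟫ = (ρ i)⁻¹ * (ρ j)⁻¹ * ⟪C₂ (e i), e j⟫ := by
          simp only [hT, ContinuousLinearMap.sub_apply, ContinuousLinearMap.id_apply,
            inner_sub_left, hB i j, heON i j]
          ring
        rw [hTe]
        have hi := hρne i
        have hj := hρne j
        field_simp
      rw [hTv, ← hexp C₂ (fun i => c i / ρ i) c.support]
      exact hC₂pos _
    intro v
    have hdense : Dense (Submodule.span ℝ (Set.range e) : Set H) :=
      Submodule.dense_iff_topologicalClosure_eq_top.mpr e.dense_span
    have hclosed : IsClosed {v : H | 0 ≤ ⟪T v, v⟫} :=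
      isClosed_le continuous_const (Continuous.inner T.continuous continuous_id)
    have hsub : (Submodule.span ℝ (Set.range e) : Set H) ⊆ {v : H | 0 ≤ ⟪T v, v⟫} := hspan
    have h2 := closure_minimal hsub hclosed
    rw [hdense.closure_eq] at h2
    exact h2 (Set.mem_univ v)
  refine ⟨‖T‖ + 1, by positivity, ?_⟩
  intro n h hmem hnorm
  -- finite representation of h
  have hreprall : ∀ v ∈ Submodule.span ℝ (φ '' Set.Iic n),
      v = ∑ i ∈ Finset.Iic n, ⟪φ i, v⟫ • φ i := by
    intro v hv
    induction hv using Submodule.span_induction with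
    | mem u hu =>
      obtain ⟨j, hj, rfl⟩ := hu
      have hj' : j ∈ Finset.Iic n := Finset.mem_Iic.mpr hj
      symm
      calc ∑ i ∈ Finset.Iic n, ⟪φ i, φ j⟫ • φ i
          = ∑ i ∈ Finset.Iic n, (if i = j then (1:ℝ) else 0) • φ i :=
            Finset.sum_congr rfl fun i _ => by rw [hφON]
        _ = φ j := by simp [hj']
    | zero => simp
    | add u v hu hv ihu ihv =>
      simp only [inner_add_right, add_smul, Finset.sum_add_distrib]
      rw [← ihu, ← ihv]
    | smul a u hu ih =>
      simp only [real_inner_smul_right]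
      conv_lhs => rw [ih]
      rw [Finset.smul_sum]
      exact Finset.sum_congr rfl fun i _ => by rw [smul_smul]
  have hrepr : h = ∑ i ∈ Finset.Iic n, ⟪φ i, h⟫ • φ i := hreprall h hmem
  set g : H := ∑ i ∈ Finset.Iic n, (⟪φ i, h⟫ / ρ i ^ 2) • φ i with hg
  have hC₂g : C₂ g = h := by
    rw [hg, map_sum]
    nth_rewrite 2 [hrepr]
    refine Finset.sum_congr rfl fun i _ => ?_
    rw [ContinuousLinearMap.map_smul, hC₂ i, smul_smul, div_mul_cancel₀ _ (pow_ne_zero 2 (hρne i))]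
  -- the vector w with e-coordinates ρ k * ⟪e k, g⟫
  set f : ℕ → ℝ := fun k => ρ k * ⟪e k, g⟫ with hf
  have hmemf : Memℓp f 2 := by
    apply memℓp_gen
    have h2 : ((2 : ℝ≥0∞).toReal) = (2 : ℝ) := by simp
    rw [h2]
    have hs : Summable fun k => ρ 0 ^ 2 * (⟪g, e k⟫ * ⟪e k, g⟫) :=
      (e.summable_inner_mul_inner g g).mul_left _
    apply Summable.of_nonneg_of_le (fun k => by positivity) (fun k => ?_) hs
    have hk : ρ k ≤ ρ 0 := hρmono (Nat.zero_le k)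
    have h0 : (0:ℝ) < ρ k := hρpos k
    have hcomm : ⟪g, e k⟫ = ⟪e k, g⟫ := real_inner_comm _ _
    rw [Real.rpow_two, hcomm, Real.norm_eq_abs, sq_abs, hf]
    have hq : ρ k * ρ k ≤ ρ 0 * ρ 0 := mul_self_le_mul_self h0.le hk
    show (ρ k * ⟪e k, g⟫) ^ 2 ≤ ρ 0 ^ 2 * (⟪e k, g⟫ * ⟪e k, g⟫)
    nlinarith [mul_self_nonneg (⟪e k, g⟫), hq]
  set w : H := e.repr.symm ⟨f, hmemf⟩ with hw
  have hwsum : HasSum (fun k => f k • e k) w := e.hasSum_repr_symm ⟨f, hmemf⟩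
  have hwk : ∀ k, ⟪e k, w⟫ = f k := by
    intro k
    rw [← e.repr_apply_apply, hw, LinearIsometryEquiv.apply_symm_apply]
  set x : H := T w with hx
  have hxk : ∀ k, ⟪e k, x⟫ = ⟪h, e k⟫ / ρ k := by
    intro k
    have hBw : HasSum (fun j => f j * ⟪e k, B (e j)⟫) ⟪e k, B w⟫ := by
      have h1 := hwsum.mapL ((innerSL ℝ (e k)).comp B)
      have hfn : (fun j => ((innerSL ℝ (e k)).comp B) (f j • e j))
          = fun j => f j * ⟪e k, B (e j)⟫ := by
        funext j
        simp only [ContinuousLinearMap.coe_comp', Function.comp_apply, map_smul, innerSL_apply_apply,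
          real_inner_smul_right, smul_eq_mul]
      rw [hfn] at h1
      exact h1
    have hCg : HasSum (fun j => ⟪e j, g⟫ * ⟪e k, C₂ (e j)⟫) ⟪e k, C₂ g⟫ := by
      have h1 := (e.hasSum_repr g).mapL ((innerSL ℝ (e k)).comp C₂)
      have hfn : (fun j => ((innerSL ℝ (e k)).comp C₂) (e.repr g j • e j))
          = fun j => ⟪e j, g⟫ * ⟪e k, C₂ (e j)⟫ := by
        funext j
        rw [e.repr_apply_apply]
        simp only [ContinuousLinearMap.coe_comp', Function.comp_apply, map_smul, innerSL_apply_apply,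
          real_inner_smul_right, smul_eq_mul]
      rw [hfn] at h1
      exact h1
    have hdelta : HasSum (fun j => (if j = k then f k else 0)) (f k) := hasSum_ite_eq k (f k)
    have hsub := hdelta.sub (hCg.mul_left (ρ k)⁻¹)
    have hfuneq : (fun j => (if j = k then f k else 0)
        - (ρ k)⁻¹ * (⟪e j, g⟫ * ⟪e k, C₂ (e j)⟫)) = fun j => f j * ⟪e k, B (e j)⟫ := by
      funext j
      have hBk : ⟪e k, B (e j)⟫
          = (if j = k then (1:ℝ) else 0) - (ρ j)⁻¹ * (ρ k)⁻¹ * ⟪e k, C₂ (e j)⟫ := by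
        rw [real_inner_comm (B (e j)) (e k), hB j k, real_inner_comm (C₂ (e j)) (e k)]
      rw [hBk]
      simp only [hf]
      have hj := hρne j
      by_cases hjk : j = k
      · subst hjk
        simp only [if_pos rfl, if_true]
        field_simp
      · simp only [if_neg hjk]
        linear_combination ((ρ k)⁻¹ * ⟪e j, g⟫ * ⟪e k, C₂ (e j)⟫) * mul_inv_cancel₀ hj
    rw [hfuneq] at hsub
    have hBwval : ⟪e k, B w⟫ = f k - (ρ k)⁻¹ * ⟪e k, C₂ g⟫ := hBw.unique hsub
    have hxval : ⟪e k, x⟫ = ⟪e k, w⟫ - ⟪e k, B w⟫ := by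
      rw [hx]
      simp only [hT, ContinuousLinearMap.sub_apply, ContinuousLinearMap.id_apply,
        inner_sub_right]
    rw [hxval, hwk, hBwval, hC₂g, real_inner_comm h (e k)]
    have hk := hρne k
    field_simp
    ring
  -- Parseval computations
  have hsum_eq : ∑' j, (⟪h, e j⟫ / ρ j) ^ 2 = ⟪x, x⟫ := by
    rw [← e.tsum_inner_mul_inner x x]
    refine tsum_congr fun j => ?_
    rw [real_inner_comm (e j) x, hxk j]
    ring
  have hxw : ⟪x, w⟫ = ⟪h, g⟫ := by
    rw [← e.tsum_inner_mul_inner x w, ← e.tsum_inner_mul_inner h g]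
    refine tsum_congr fun j => ?_
    rw [real_inner_comm (e j) x, hxk j, hwk j, hf]
    have h0 := hρne j
    have hc : ⟪e j, g⟫ = ⟪g, e j⟫ := real_inner_comm _ _
    field_simp
  have hxw0 : 0 ≤ ⟪x, w⟫ := by
    have h1 := hTpos w
    rwa [← hx] at h1
  have hsumsq : ∑ i ∈ Finset.Iic n, ⟪φ i, h⟫ ^ 2 = 1 := by
    calc ∑ i ∈ Finset.Iic n, ⟪φ i, h⟫ ^ 2
        = ⟪h, ∑ i ∈ Finset.Iic n, ⟪φ i, h⟫ • φ i⟫ := by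
          rw [inner_sum]
          refine (Finset.sum_congr rfl fun i _ => ?_).symm
          rw [real_inner_smul_right, real_inner_comm (φ i) h]
          ring
      _ = ⟪h, h⟫ := by rw [← hrepr]
      _ = 1 := by rw [real_inner_self_eq_norm_sq, hnorm]; norm_num
  have hhg : ⟪h, g⟫ ≤ 1 / ρ n ^ 2 := by
    have h1 : ⟪h, g⟫ = ∑ i ∈ Finset.Iic n, ⟪φ i, h⟫ ^ 2 / ρ i ^ 2 := by
      rw [hg, inner_sum]
      refine Finset.sum_congr rfl fun i _ => ?_
      rw [real_inner_smul_right, real_inner_comm (φ i) h]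
      ring
    have h2 : ∀ i ∈ Finset.Iic n, ⟪φ i, h⟫ ^ 2 / ρ i ^ 2 ≤ ⟪φ i, h⟫ ^ 2 / ρ n ^ 2 := by
      intro i hi
      have hle : ρ n ≤ ρ i := hρmono (Finset.mem_Iic.mp hi)
      gcongr
      · exact pow_pos (hρpos n) 2
      · exact (hρpos n).le
    calc ⟪h, g⟫ = ∑ i ∈ Finset.Iic n, ⟪φ i, h⟫ ^ 2 / ρ i ^ 2 := h1
      _ ≤ ∑ i ∈ Finset.Iic n, ⟪φ i, h⟫ ^ 2 / ρ n ^ 2 := Finset.sum_le_sum h2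
      _ = (∑ i ∈ Finset.Iic n, ⟪φ i, h⟫ ^ 2) / ρ n ^ 2 := by rw [← Finset.sum_div]
      _ = 1 / ρ n ^ 2 := by rw [hsumsq]
  have hTineq : ⟪x, x⟫ ≤ ‖T‖ * ⟪x, w⟫ := by
    rcases eq_or_ne x 0 with h0 | h0
    · rw [h0]
      simp
    · have hq : ∀ t : ℝ, 0 ≤ ⟪T x, x⟫ * (t * t) + (-2 * ⟪x, x⟫) * t + ⟪x, w⟫ := by
        intro t
        have h1 := hTpos (w - t • x)
        have hexp2 : ⟪T (w - t • x), w - t • x⟫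
            = ⟪T x, x⟫ * (t * t) + (-2 * ⟪x, x⟫) * t + ⟪x, w⟫ := by
          have e1 : ⟪T w, w⟫ = ⟪x, w⟫ := by rw [← hx]
          have e2 : ⟪T w, x⟫ = ⟪x, x⟫ := by rw [← hx]
          have e3 : ⟪T x, w⟫ = ⟪x, x⟫ := by rw [hTsym x w, ← hx]
          rw [map_sub, map_smul]
          simp only [inner_sub_left, inner_sub_right, real_inner_smul_left,
            real_inner_smul_right]
          rw [e1, e2, e3]
          ring
        rw [hexp2] at h1
        exact h1
      have hd := discrim_le_zero hq
      rw [discrim] at hd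
      have hTx : ⟪T x, x⟫ ≤ ‖T‖ * ⟪x, x⟫ := by
        have h1 : ⟪T x, x⟫ ≤ ‖T x‖ * ‖x‖ := real_inner_le_norm _ _
        have h2 : ‖T x‖ ≤ ‖T‖ * ‖x‖ := T.le_opNorm x
        rw [real_inner_self_eq_norm_sq]
        nlinarith [h1, mul_le_mul_of_nonneg_right h2 (norm_nonneg x), norm_nonneg x]
      have hxx : (0:ℝ) < ⟪x, x⟫ := by
        rw [real_inner_self_eq_norm_sq]
        exact pow_pos (norm_pos_iff.mpr h0) 2
      exact quad_aux hd hTx hxx hxw0 (norm_nonneg T)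
  have hρn2 : (0:ℝ) < ρ n ^ 2 := pow_pos (hρpos n) 2
  calc ∑' j, (⟪h, e j⟫ / ρ j) ^ 2 = ⟪x, x⟫ := hsum_eq
    _ ≤ ‖T‖ * ⟪x, w⟫ := hTineq
    _ = ‖T‖ * ⟪h, g⟫ := by rw [hxw]
    _ ≤ ‖T‖ * (1 / ρ n ^ 2) := by
        have hg0 : 0 ≤ ⟪h, g⟫ := by rw [← hxw]; exact hxw0
        exact mul_le_mul_of_nonneg_left hhg (norm_nonneg T)
    _ ≤ (‖T‖ + 1) / ρ n ^ 2 := by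
        rw [mul_one_div]
        gcongr
        linarith
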